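/- Let X solve dX(t) = b(X(t))dt + σ(t)dB^H(t), X(0) = x ∈ ℝ^d, with H > 1/2, under hypotheses (H1) and (H2). Choose λ_0 with 1 − α_0 < λ_0 < H and λ_0 β_0 > H − 1/2. Then there is a constant C(T) such that for all s,t ∈ [0,T]: |X_t − X_s| ≤ C { [1 + e^{KT}(|x| + T)]|t−s| + e^{KT} ||B^H||_{λ_0}(T^{λ_0} + T^{λ_0+α_0})|t−s| + ||B^H||_{λ_0}(|t−s|^{λ_0} + |t−s|^{λ_0+α_0}) } ≤ C(T)(|t−s| + ||B^H||_{λ_0}|t−s|^{λ_0}), where ||·||_{λ_0} is the λ_0-Hölder seminorm on [0,T]. -/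

import Mathlib

open MeasureTheory ProbabilityTheory Real Filter Set
open scoped BigOperators ENNReal NNReal InnerProductSpace

noncomputable section

abbrev Vec (d : ℕ) := EuclideanSpace ℝ (Fin d)

/-- Covariance function of fractional Brownian motion with Hurst parameter `H`. -/
def fbmCov (H t s : ℝ) : ℝ := (|t| ^ (2*H) + |s| ^ (2*H) - |t - s| ^ (2*H)) / 2

/-- `B` is a `d`-dimensional fractional Brownian motion with Hurst parameter `H`
under the probability measure `μ`: a centered Gaussian process with continuous paths and
covariance `E[B_t^i B_s^j] = R_H(t,s) δ_{ij}`. -/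
def IsFBM {Ω : Type*} [MeasurableSpace Ω] (μ : Measure Ω) (d : ℕ) (H : ℝ)
    (B : ℝ → Ω → Vec d) : Prop :=
  (∀ t, Measurable (B t)) ∧
  (∀ ω, Continuous fun t => B t ω) ∧
  (∀ ω, B 0 ω = 0) ∧
  (∀ (i : Fin d) (t : ℝ), ∫ ω, B t ω i ∂μ = 0) ∧
  (∀ (i j : Fin d) (t s : ℝ), ∫ ω, B t ω i * B s ω j ∂μ = if i = j then fbmCov H t s else 0) ∧
  (∀ (n : ℕ) (c : Fin n → ℝ) (ts : Fin n → ℝ) (idx : Fin n → Fin d), ∃ v : NNReal,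
    μ.map (fun ω => ∑ k, c k * B (ts k) ω (idx k)) = gaussianReal 0 v)

/-- Riemann–Stieltjes sum of `σ` against the path `g` along the partition `p`. -/
def rsSum {d : ℕ} (σ : ℝ → Vec d →L[ℝ] Vec d) (g : ℝ → Vec d) (n : ℕ) (p : ℕ → ℝ) : Vec d :=
  ∑ k ∈ Finset.range n, σ (p k) (g (p (k+1)) - g (p k))

/-- `I` is the (Young/Riemann–Stieltjes) integral `∫_a^b σ(s) dg(s)`. -/
def IsRSIntegral {d : ℕ} (σ : ℝ → Vec d →L[ℝ] Vec d) (g : ℝ → Vec d) (a b : ℝ)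
    (I : Vec d) : Prop :=
  ∀ ε > 0, ∃ δ > 0, ∀ (n : ℕ) (p : ℕ → ℝ), p 0 = a → p n = b →
    (∀ k < n, p k < p (k+1)) → (∀ k < n, p (k+1) - p k < δ) →
    ‖rsSum σ g n p - I‖ < ε

/-- `X` solves the SDE `dX(t) = b(X(t))dt + σ(t) dB^H(t)`, `X(0) = x`, pathwise on `[0,T]`,
the noise integral being understood in the Riemann–Stieltjes (Young) sense. -/
def SolvesSDE {Ω : Type*} {d : ℕ} (T : ℝ) (b : Vec d → Vec d) (σ : ℝ → Vec d →L[ℝ] Vec d)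
    (B : ℝ → Ω → Vec d) (x : Vec d) (X : ℝ → Ω → Vec d) : Prop :=
  ∀ ω, (Continuous fun t => X t ω) ∧ X 0 ω = x ∧
    ∀ t ∈ Set.Icc (0:ℝ) T, ∃ I, IsRSIntegral σ (fun s => B s ω) 0 t I ∧
      X t ω = x + (∫ s in (0:ℝ)..t, b (X s ω)) + I

/-- λ-Hölder seminorm of a path on `[0,T]`. -/
def holderSemi {d : ℕ} (lam T : ℝ) (f : ℝ → Vec d) : ℝ :=
  sSup {r : ℝ | ∃ s t : ℝ, 0 ≤ s ∧ s < t ∧ t ≤ T ∧ r = ‖f t - f s‖ / (t - s) ^ lam}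

/-- Natural filtration of a process. -/
def natFilt {Ω : Type*} [MeasurableSpace Ω] {d : ℕ} (W : ℝ → Ω → Vec d) (t : ℝ) :
    MeasurableSpace Ω :=
  ⨆ s ∈ Set.Icc (0:ℝ) t, MeasurableSpace.comap (W s) inferInstance

/-- An abstract packaging of the Malliavin calculus associated with a `d`-dimensional
fractional Brownian motion on `[0,T]`: the Hilbert space `𝓗` (closure of step functions
under the fBm covariance inner product, `emb` embedding functions into `𝓗`), the kernel
`K_H`, the isometry `K_H^*`, the operator `R_H = K_H ∘ K_H^*`, the Sobolev space `𝔻^{1,2}`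
with Malliavin derivative `MD`, and the divergence `dvg = δ` with its domain, linked by the
integration-by-parts duality. -/
structure MalliavinStructure (Ω : Type*) [MeasurableSpace Ω] (μ : Measure Ω)
    (d : ℕ) (T : ℝ) (𝓗 : Type*) [NormedAddCommGroup 𝓗] [InnerProductSpace ℝ 𝓗] where
  emb : (ℝ → Vec d) → 𝓗
  KH : ℝ → ℝ → ℝ
  KHstar : 𝓗 → ℝ → Vec d
  RH : 𝓗 → ℝ → Vec d
  D12 : Set (Ω → ℝ)
  MD : (Ω → ℝ) → Ω → 𝓗
  domδ : Set (Ω → 𝓗)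
  dvg : (Ω → 𝓗) → Ω → ℝ
  KHstar_isometry : ∀ g h : 𝓗, ⟪g, h⟫_ℝ = ∫ s in (0:ℝ)..T, ⟪KHstar g s, KHstar h s⟫_ℝ
  RH_eq : ∀ g t, RH g t = ∫ s in (0:ℝ)..t, KH t s • KHstar g s
  duality : ∀ F ∈ D12, ∀ u ∈ domδ,
    ∫ ω, ⟪MD F ω, u ω⟫_ℝ ∂μ = ∫ ω, F ω * dvg u ω ∂μ

/-- The element `Σ_j (σ_{ij} 1_{[0,t]}) e^j` of (the function representation of) `𝓗`. -/
def sigmaRow {d : ℕ} (σ : ℝ → Vec d →L[ℝ] Vec d) (i : Fin d) (t : ℝ) : ℝ → Vec d :=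
  fun s => Set.indicator (Set.Icc (0:ℝ) t)
    (fun s' => ∑ j, (σ s' (EuclideanSpace.single j 1) i) • EuclideanSpace.single j (1:ℝ)) s



namespace FbmAux

variable {d : ℕ}
/-- monotonicity of a partition -/
lemma part_mono {p : ℕ → ℝ} {n : ℕ} (h : ∀ k < n, p k < p (k+1)) :
    ∀ {i j : ℕ}, i ≤ j → j ≤ n → p i ≤ p j := by
  intro i j hij hjn
  induction j with
  | zero => simp_all
  | succ m ih =>
    rcases Nat.lt_or_ge i (m+1) with hlt | hge
    · have h1 : p i ≤ p m := ih (Nat.lt_succ_iff.mp hlt) (le_trans (Nat.le_succ m) hjn)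
      exact le_trans h1 (le_of_lt (h m (Nat.lt_of_succ_le hjn)))
    · have : i = m + 1 := le_antisymm hij hge
      simp [this]

/-- removing one interior point from a Riemann–Stieltjes sum -/
lemma rsSum_remove (σ : ℝ → Vec d →L[ℝ] Vec d) (g : ℝ → Vec d) (j m : ℕ) (p : ℕ → ℝ) :
    rsSum σ g (j + m + 2) p
      = rsSum σ g (j + m + 1) (fun i => if i < j + 1 then p i else p (i+1))
        + (σ (p (j+1)) - σ (p j)) (g (p (j+2)) - g (p (j+1))) := by
  classical
  set F : ℕ → Vec d := fun i => σ (p i) (g (p (i+1)) - g (p i)) with hF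
  set p' : ℕ → ℝ := fun i => if i < j + 1 then p i else p (i+1) with hp'
  set F' : ℕ → Vec d := fun i => σ (p' i) (g (p' (i+1)) - g (p' i)) with hF'
  have hsum1 : rsSum σ g (j + m + 2) p
      = (∑ i ∈ Finset.range j, F i) + F j + F (j+1) + ∑ i ∈ Finset.range m, F (j + 2 + i) := by
    rw [rsSum]
    have : j + m + 2 = (j + 2) + m := by ring
    rw [this, Finset.sum_range_add, Finset.sum_range_succ, Finset.sum_range_succ]
  have hsum2 : rsSum σ g (j + m + 1) p'
      = (∑ i ∈ Finset.range j, F' i) + F' j + ∑ i ∈ Finset.range m, F' (j + 1 + i) := by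
    rw [rsSum]
    have : j + m + 1 = (j + 1) + m := by ring
    rw [this, Finset.sum_range_add, Finset.sum_range_succ]
  have e1 : ∀ i ∈ Finset.range j, F' i = F i := by
    intro i hi
    have hi' := Finset.mem_range.mp hi
    have h1 : p' i = p i := by
      simp [hp', Nat.lt_succ_of_lt hi']
      exact fun h => absurd h (by omega)
    have h2 : p' (i+1) = p (i+1) := by
      simp [hp', Nat.succ_lt_succ hi']
      exact fun h => absurd h (by omega)
    simp [hF', hF, h1, h2]
  have e2 : F' j = σ (p j) (g (p (j+2)) - g (p j)) := by
    have h1 : p' j = p j := by simp [hp']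
    have h2 : p' (j+1) = p (j+2) := by simp [hp']
    simp [hF', h1, h2]
  have e3 : ∀ i ∈ Finset.range m, F' (j + 1 + i) = F (j + 2 + i) := by
    intro i hi
    have h1 : p' (j + 1 + i) = p (j + 2 + i) := by
      simp only [hp', if_neg (by omega : ¬ (j + 1 + i < j + 1))]
      congr 1; omega
    have h2 : p' (j + 1 + i + 1) = p (j + 2 + i + 1) := by
      simp only [hp', if_neg (by omega : ¬ (j + 1 + i + 1 < j + 1))]
      congr 1; omega
    simp [hF', hF, h1, h2]
  rw [hsum1, hsum2, Finset.sum_congr rfl e1, Finset.sum_congr rfl e3, e2]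
  simp only [hF, map_sub, ContinuousLinearMap.sub_apply]
  abel



def youngS (θ : ℝ) (n : ℕ) : ℝ := ∑ m ∈ Finset.range n, ((m:ℝ)+1) ^ (-θ)

def youngZ (θ : ℝ) : ℝ := ∑' m : ℕ, ((m:ℝ)+1) ^ (-θ)

lemma summable_young {θ : ℝ} (hθ : 1 < θ) : Summable (fun m : ℕ => ((m:ℝ)+1) ^ (-θ)) := by
  have h : Summable (fun m : ℕ => ((m:ℝ)) ^ (-θ)) := Real.summable_nat_rpow.mpr (by linarith)
  have := (summable_nat_add_iff (f := fun m : ℕ => ((m:ℝ)) ^ (-θ)) 1).mpr h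
  convert this using 2 with m
  · rfl
  · rw [Nat.cast_add, Nat.cast_one]

lemma youngS_le_youngZ {θ : ℝ} (hθ : 1 < θ) (n : ℕ) : youngS θ n ≤ youngZ θ := by
  apply Summable.sum_le_tsum (Finset.range n) (fun m _ => by positivity) (summable_young hθ)

lemma youngZ_nonneg {θ : ℝ} : 0 ≤ youngZ θ :=
  tsum_nonneg (fun m => by positivity)

lemma young_partition (σ : ℝ → Vec d →L[ℝ] Vec d) (g : ℝ → Vec d)
    (T Hσ Λ lam al : ℝ) (hlam : 0 < lam) (hal : 0 < al)
    (hHσ : 0 ≤ Hσ) (hΛ : 0 ≤ Λ)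
    (hσ : ∀ s ∈ Icc (0:ℝ) T, ∀ t ∈ Icc (0:ℝ) T, ‖σ t - σ s‖ ≤ Hσ * |t - s| ^ al)
    (hg : ∀ s ∈ Icc (0:ℝ) T, ∀ t ∈ Icc (0:ℝ) T, s ≤ t → ‖g t - g s‖ ≤ Λ * (t - s) ^ lam)
    (a b : ℝ) (ha : 0 ≤ a) (hbT : b ≤ T) :
    ∀ (n : ℕ) (p : ℕ → ℝ), p 0 = a → p n = b → (∀ k < n, p k < p (k+1)) →
      ‖rsSum σ g n p - σ a (g b - g a)‖
        ≤ Hσ * Λ * (2*(b-a)) ^ (lam+al) * youngS (lam+al) (n-1) := by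
  intro n
  induction n using Nat.strong_induction_on with
  | _ n ih =>
  rcases n with _ | n
  · intro p h0 hn hmono
    have hab : a = b := by rw [← h0, ← hn]
    subst hab
    simp [rsSum, youngS]
  rcases n with _ | N
  · intro p h0 hn hmono
    have h1 : rsSum σ g 1 p = σ a (g b - g a) := by
      simp [rsSum, h0, hn]
    rw [h1]
    simp [youngS]
  · intro p h0 hn hmono
    -- p is monotone up to N+2
    have hmem : ∀ i, i ≤ N+2 → p i ∈ Icc (0:ℝ) T := by
      intro i hi
      constructor
      · exact le_trans ha (h0 ▸ FbmAux.part_mono hmono (Nat.zero_le _) hi)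
      · exact le_trans (hn ▸ FbmAux.part_mono hmono hi le_rfl) hbT
    have hab : a ≤ b := by
      rw [← h0, ← hn]; exact FbmAux.part_mono hmono (Nat.zero_le _) le_rfl
    -- telescoping bound
    have h1 : ∑ j ∈ Finset.range (N+1), (p (j+2) - p (j+1)) = p (N+2) - p 1 := by
      have := Finset.sum_range_sub (fun i => p (i+1)) (N+1)
      simpa using this
    have h2 : ∑ j ∈ Finset.range (N+1), (p (j+1) - p j) = p (N+1) - p 0 :=
      Finset.sum_range_sub p (N+1)
    have htel : ∑ j ∈ Finset.range (N+1), (p (j+2) - p j) ≤ 2*(b-a) := by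
      have hsplit : ∑ j ∈ Finset.range (N+1), (p (j+2) - p j)
          = (∑ j ∈ Finset.range (N+1), (p (j+2) - p (j+1)))
            + ∑ j ∈ Finset.range (N+1), (p (j+1) - p j) := by
        rw [← Finset.sum_add_distrib]
        exact Finset.sum_congr rfl (fun j _ => by ring)
      have hp1 : a ≤ p 1 := h0 ▸ FbmAux.part_mono hmono (Nat.zero_le _) (by omega)
      have hpN1 : p (N+1) ≤ b := hn ▸ FbmAux.part_mono hmono (by omega) le_rfl
      rw [hsplit, h1, h2, h0, hn]
      linarith
    obtain ⟨j, hjmem, hjle⟩ :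
        ∃ j ∈ Finset.range (N+1), p (j+2) - p j ≤ 2*(b-a)/((N:ℝ)+1) := by
      apply Finset.exists_le_of_sum_le ⟨0, by simp⟩
      rw [Finset.sum_const, Finset.card_range, nsmul_eq_mul]
      have hne : ((N:ℝ)+1) ≠ 0 := by positivity
      push_cast
      rw [mul_div_cancel₀ _ hne]
      exact htel
    have hj : j < N + 1 := Finset.mem_range.mp hjmem
    set p' : ℕ → ℝ := fun i => if i < j + 1 then p i else p (i+1) with hp'
    have h0' : p' 0 = a := by simp [hp', h0]
    have hn' : p' (N+1) = b := by
      have : ¬ (N+1 < j+1) := by omega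
      simp only [hp', this, if_false]
      exact hn
    have hmono' : ∀ k < N+1, p' k < p' (k+1) := by
      intro k hk
      rcases Nat.lt_or_ge (k+1) (j+1) with h | h
      · have hk' : k < j + 1 := by omega
        simp only [hp', if_pos h, if_pos hk']
        exact hmono k (by omega)
      · rcases Nat.eq_or_lt_of_le h with h' | h'
        · have hk' : k < j + 1 := by omega
          have hkj : k = j := by omega
          simp only [hp', if_pos hk', if_neg (by omega : ¬ (k+1 < j+1))]
          subst hkj
          exact lt_trans (hmono k (by omega)) (hmono (k+1) (by omega))
        · have hk1 : ¬ (k < j+1) := by omega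
          simp only [hp', if_neg hk1, if_neg (by omega : ¬ (k+1 < j+1))]
          exact hmono (k+1) (by omega)
    have hIH := ih (N+1) (by omega) p' h0' hn' hmono'
    -- the removal identity
    have hNjm : j + (N - j) + 2 = N + 2 := by omega
    have hNjm1 : j + (N - j) + 1 = N + 1 := by omega
    have hrw := FbmAux.rsSum_remove σ g j (N - j) p
    rw [hNjm, hNjm1] at hrw
    -- bound the removal cost
    set D := p (j+2) - p j with hD
    have hD0 : 0 < D := by
      have := hmono j (by omega)
      have := hmono (j+1) (by omega)
      simp only [hD]; linarith
    have hσc : ‖σ (p (j+1)) - σ (p j)‖ ≤ Hσ * D ^ al := by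
      have := hσ (p j) (hmem j (by omega)) (p (j+1)) (hmem (j+1) (by omega))
      refine le_trans this ?_
      have h1 : |p (j+1) - p j| ≤ D := by
        have h3 := hmono j (by omega)
        have h4 := hmono (j+1) (by omega)
        rw [abs_of_nonneg (by linarith)]
        simp only [hD]; linarith
      exact mul_le_mul_of_nonneg_left
        (Real.rpow_le_rpow (abs_nonneg _) h1 hal.le) hHσ
    have hgc : ‖g (p (j+2)) - g (p (j+1))‖ ≤ Λ * D ^ lam := by
      have h3 := hmono j (by omega)
      have h4 := hmono (j+1) (by omega)
      have := hg (p (j+1)) (hmem (j+1) (by omega)) (p (j+2)) (hmem (j+2) (by omega)) (by linarith)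
      refine le_trans this ?_
      have h1 : p (j+2) - p (j+1) ≤ D := by simp only [hD]; linarith
      exact mul_le_mul_of_nonneg_left
        (Real.rpow_le_rpow (by linarith) h1 hlam.le) hΛ
    have hcost : ‖(σ (p (j+1)) - σ (p j)) (g (p (j+2)) - g (p (j+1)))‖
        ≤ Hσ * Λ * (2*(b-a)) ^ (lam+al) * ((N:ℝ)+1) ^ (-(lam+al)) := by
      have hle := ContinuousLinearMap.le_opNorm (σ (p (j+1)) - σ (p j))
        (g (p (j+2)) - g (p (j+1)))
      have hmul : ‖σ (p (j+1)) - σ (p j)‖ * ‖g (p (j+2)) - g (p (j+1))‖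
          ≤ (Hσ * D ^ al) * (Λ * D ^ lam) :=
        mul_le_mul hσc hgc (norm_nonneg _)
          (mul_nonneg hHσ (Real.rpow_nonneg hD0.le _))
      have hDrw : (Hσ * D ^ al) * (Λ * D ^ lam) = Hσ * Λ * D ^ (lam+al) := by
        rw [Real.rpow_add hD0]
        ring
      have hDle : D ^ (lam+al) ≤ (2*(b-a)) ^ (lam+al) * ((N:ℝ)+1) ^ (-(lam+al)) := by
        have h2ba : (0:ℝ) ≤ 2*(b-a) := by linarith
        have hN1 : (0:ℝ) < (N:ℝ)+1 := by positivity
        have := Real.rpow_le_rpow hD0.le hjle (by positivity : (0:ℝ) ≤ lam+al)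
        refine le_trans this ?_
        rw [Real.div_rpow h2ba hN1.le, Real.rpow_neg hN1.le, div_eq_mul_inv]
      calc ‖(σ (p (j+1)) - σ (p j)) (g (p (j+2)) - g (p (j+1)))‖
          ≤ Hσ * Λ * D ^ (lam+al) := by rw [← hDrw]; exact le_trans hle hmul
        _ ≤ Hσ * Λ * ((2*(b-a)) ^ (lam+al) * ((N:ℝ)+1) ^ (-(lam+al))) :=
            mul_le_mul_of_nonneg_left hDle (mul_nonneg hHσ hΛ)
        _ = Hσ * Λ * (2*(b-a)) ^ (lam+al) * ((N:ℝ)+1) ^ (-(lam+al)) := by ring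
    -- combine
    have hSrw : youngS (lam+al) (N+2-1) = youngS (lam+al) (N+1-1) + ((N:ℝ)+1) ^ (-(lam+al)) := by
      show youngS (lam+al) (N+1) = youngS (lam+al) N + ((N:ℝ)+1) ^ (-(lam+al))
      rw [youngS, Finset.sum_range_succ]
      rfl
    calc ‖rsSum σ g (N+2) p - σ a (g b - g a)‖
        = ‖(rsSum σ g (N+1) p' - σ a (g b - g a))
            + (σ (p (j+1)) - σ (p j)) (g (p (j+2)) - g (p (j+1)))‖ := by
          rw [hrw]; congr 1; abel
      _ ≤ ‖rsSum σ g (N+1) p' - σ a (g b - g a)‖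
            + ‖(σ (p (j+1)) - σ (p j)) (g (p (j+2)) - g (p (j+1)))‖ := norm_add_le _ _
      _ ≤ Hσ * Λ * (2*(b-a)) ^ (lam+al) * youngS (lam+al) (N+1-1)
            + Hσ * Λ * (2*(b-a)) ^ (lam+al) * ((N:ℝ)+1) ^ (-(lam+al)) :=
          add_le_add hIH hcost
      _ = Hσ * Λ * (2*(b-a)) ^ (lam+al) * youngS (lam+al) (N+2-1) := by
          rw [hSrw]; ring

/-- equidistant partition -/
lemma eqPart_exists {a b δ : ℝ} (hab : a < b) (hδ : 0 < δ) :
    ∃ (n : ℕ) (p : ℕ → ℝ), 0 < n ∧ p 0 = a ∧ p n = b ∧ (∀ k < n, p k < p (k+1)) ∧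
      (∀ k < n, p (k+1) - p k < δ) := by
  obtain ⟨n, hn⟩ := exists_nat_gt ((b-a)/δ)
  have hn0 : 0 < n := by
    by_contra h
    push_neg at h
    interval_cases n
    simp only [Nat.cast_zero] at hn
    have : 0 < (b-a)/δ := div_pos (by linarith) hδ
    linarith
  have hnR : (0:ℝ) < n := by exact_mod_cast hn0
  refine ⟨n, fun k => a + (b-a)*k/n, hn0, by simp, ?_, ?_, ?_⟩
  · field_simp
    ring
  · intro k hk
    have : (b-a)*(k+1)/n - (b-a)*k/n = (b-a)/n := by field_simp; ring
    push_cast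
    have hpos : 0 < (b-a)/n := div_pos (by linarith) hnR
    nlinarith [this]
  · intro k hk
    have hstep : a + (b-a)*((k:ℝ)+1)/n - (a + (b-a)*k/n) = (b-a)/n := by
      field_simp; ring
    push_cast
    rw [hstep]
    rw [div_lt_iff₀ hnR]
    rw [div_lt_iff₀ hδ] at hn
    linarith

/-- Young–Loeve estimate from approximability by Riemann–Stieltjes sums. -/
lemma young_est (σ : ℝ → Vec d →L[ℝ] Vec d) (g : ℝ → Vec d)
    (T Hσ Λ lam al : ℝ) (hlam : 0 < lam) (hal : 0 < al)
    (hHσ : 0 ≤ Hσ) (hΛ : 0 ≤ Λ)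
    (hσ : ∀ s ∈ Icc (0:ℝ) T, ∀ t ∈ Icc (0:ℝ) T, ‖σ t - σ s‖ ≤ Hσ * |t - s| ^ al)
    (hg : ∀ s ∈ Icc (0:ℝ) T, ∀ t ∈ Icc (0:ℝ) T, s ≤ t → ‖g t - g s‖ ≤ Λ * (t - s) ^ lam)
    (hθ : 1 < lam + al)
    (a b : ℝ) (ha : 0 ≤ a) (hbT : b ≤ T) (I : Vec d)
    (hclose : ∀ ε > 0, ∃ (n : ℕ) (p : ℕ → ℝ), p 0 = a ∧ p n = b ∧
      (∀ k < n, p k < p (k+1)) ∧ ‖rsSum σ g n p - I‖ ≤ ε) :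
    ‖I - σ a (g b - g a)‖ ≤ Hσ * Λ * (2*(b-a)) ^ (lam+al) * youngZ (lam+al) := by
  refine le_of_forall_pos_le_add ?_
  intro ε hε
  obtain ⟨n, p, h0, hn, hmono, hcl⟩ := hclose ε hε
  have hmax := young_partition σ g T Hσ Λ lam al hlam hal hHσ hΛ hσ hg a b ha hbT n p h0 hn hmono
  have hZ : youngS (lam+al) (n-1) ≤ youngZ (lam+al) := youngS_le_youngZ hθ _
  have hfac : (0:ℝ) ≤ Hσ * Λ * (2*(b-a)) ^ (lam+al) := by
    have hab : a ≤ b := by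
      rw [← h0, ← hn]; exact FbmAux.part_mono hmono (Nat.zero_le _) le_rfl
    have : (0:ℝ) ≤ (2*(b-a)) ^ (lam+al) := Real.rpow_nonneg (by linarith) _
    positivity
  calc ‖I - σ a (g b - g a)‖
      ≤ ‖I - rsSum σ g n p‖ + ‖rsSum σ g n p - σ a (g b - g a)‖ := by
        have := norm_add_le (I - rsSum σ g n p) (rsSum σ g n p - σ a (g b - g a))
        simpa using this
    _ ≤ ε + Hσ * Λ * (2*(b-a)) ^ (lam+al) * youngS (lam+al) (n-1) := by
        refine add_le_add ?_ hmax
        rw [norm_sub_rev]; exact hcl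
    _ ≤ Hσ * Λ * (2*(b-a)) ^ (lam+al) * youngZ (lam+al) + ε := by
        rw [add_comm]
        exact add_le_add_left (mul_le_mul_of_nonneg_left hZ hfac) _

/-- the RS integral over a degenerate interval is 0 -/
lemma rsint_zero {σ : ℝ → Vec d →L[ℝ] Vec d} {g : ℝ → Vec d} {a : ℝ} {I : Vec d}
    (h : IsRSIntegral σ g a a I) : I = 0 := by
  by_contra hne
  have hpos : 0 < ‖I‖ := norm_pos_iff.mpr hne
  obtain ⟨δ, hδ, hp⟩ := h ‖I‖ hpos
  have := hp 0 (fun _ => a) rfl rfl (by omega) (by omega)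
  simp only [rsSum, Finset.range_zero, Finset.sum_empty, zero_sub, norm_neg] at this
  exact lt_irrefl _ this

/-- closeness for an RS integral on `[a,b]` itself -/
lemma close_self {σ : ℝ → Vec d →L[ℝ] Vec d} {g : ℝ → Vec d} {a b : ℝ} {I : Vec d}
    (hI : IsRSIntegral σ g a b I) (hab : a < b) :
    ∀ ε > 0, ∃ (n : ℕ) (p : ℕ → ℝ), p 0 = a ∧ p n = b ∧
      (∀ k < n, p k < p (k+1)) ∧ ‖rsSum σ g n p - I‖ ≤ ε := by
  intro ε hε
  obtain ⟨δ, hδ, hp⟩ := hI ε hε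
  obtain ⟨n, p, hn0, h0, hn, hmono, hmesh⟩ := eqPart_exists hab hδ
  exact ⟨n, p, h0, hn, hmono, (hp n p h0 hn hmono hmesh).le⟩

/-- closeness of `I_t - I_s` to RS sums over `[s,t]`, via concatenation of partitions -/
lemma close_diff {σ : ℝ → Vec d →L[ℝ] Vec d} {g : ℝ → Vec d} {s t : ℝ} {Is It : Vec d}
    (hIs : IsRSIntegral σ g 0 s Is) (hIt : IsRSIntegral σ g 0 t It)
    (hs : 0 < s) (hst : s < t) :
    ∀ ε > 0, ∃ (n : ℕ) (p : ℕ → ℝ), p 0 = s ∧ p n = t ∧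
      (∀ k < n, p k < p (k+1)) ∧ ‖rsSum σ g n p - (It - Is)‖ ≤ ε := by
  intro ε hε
  have hε2 : 0 < ε/2 := by linarith
  obtain ⟨δs, hδs, hps⟩ := hIs (ε/2) hε2
  obtain ⟨δt, hδt, hpt⟩ := hIt (ε/2) hε2
  set δ := min δs δt with hδdef
  have hδ : 0 < δ := lt_min hδs hδt
  obtain ⟨m, r, hm0, hr0, hrm, hrmono, hrmesh⟩ := eqPart_exists hs hδ
  obtain ⟨n, q, hn0, hq0, hqn, hqmono, hqmesh⟩ := eqPart_exists hst hδ
  set P : ℕ → ℝ := fun k => if k < m then r k else q (k - m) with hP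
  have hPr : ∀ k ≤ m, P k = r k := by
    intro k hk
    rcases lt_or_eq_of_le hk with h | h
    · simp [hP, h]
    · subst h
      simp only [hP, lt_irrefl, if_false, Nat.sub_self]
      rw [hq0, ← hrm]
  have hPq : ∀ k, P (m + k) = q k := by
    intro k
    rcases Nat.eq_zero_or_pos k with h | h
    · subst h; simpa using hPr m le_rfl |>.trans (by rw [hrm, ← hq0])
    · simp only [hP, if_neg (by omega : ¬ (m + k < m))]
      congr 1; omega
  have hP0 : P 0 = 0 := by rw [hPr 0 (Nat.zero_le _), hr0]
  have hPmn : P (m + n) = t := by rw [hPq n, hqn]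
  have hPmono : ∀ k < m + n, P k < P (k+1) := by
    intro k hk
    rcases Nat.lt_or_ge k m with h | h
    · rw [hPr k h.le, hPr (k+1) h]
      exact hrmono k h
    · obtain ⟨i, rfl⟩ := Nat.exists_eq_add_of_le h
      rw [hPq i, show m + i + 1 = m + (i+1) by ring, hPq (i+1)]
      exact hqmono i (by omega)
  have hPmesh : ∀ k < m + n, P (k+1) - P k < δ := by
    intro k hk
    rcases Nat.lt_or_ge k m with h | h
    · rw [hPr k h.le, hPr (k+1) h]
      exact hrmesh k h
    · obtain ⟨i, rfl⟩ := Nat.exists_eq_add_of_le h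
      rw [hPq i, show m + i + 1 = m + (i+1) by ring, hPq (i+1)]
      exact hqmesh i (by omega)
  have hsplit : rsSum σ g (m + n) P = rsSum σ g m r + rsSum σ g n q := by
    rw [rsSum, rsSum, rsSum, Finset.sum_range_add]
    congr 1
    · apply Finset.sum_congr rfl
      intro k hk
      have hk' := Finset.mem_range.mp hk
      rw [hPr k hk'.le, hPr (k+1) hk']
    · apply Finset.sum_congr rfl
      intro k hk
      rw [hPq k, show m + k + 1 = m + (k+1) by ring, hPq (k+1)]
  have h1 : ‖rsSum σ g (m+n) P - It‖ < ε/2 :=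
    hpt (m+n) P hP0 hPmn hPmono (fun k hk => lt_of_lt_of_le (hPmesh k hk) (min_le_right _ _))
  have h2 : ‖rsSum σ g m r - Is‖ < ε/2 :=
    hps m r hr0 hrm hrmono (fun k hk => lt_of_lt_of_le (hrmesh k hk) (min_le_left _ _))
  refine ⟨n, q, hq0, hqn, hqmono, ?_⟩
  have : rsSum σ g n q - (It - Is) = (rsSum σ g (m+n) P - It) - (rsSum σ g m r - Is) := by
    rw [hsplit]; abel
  rw [this]
  calc ‖(rsSum σ g (m+n) P - It) - (rsSum σ g m r - Is)‖
      ≤ ‖rsSum σ g (m+n) P - It‖ + ‖rsSum σ g m r - Is‖ := norm_sub_le _ _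
    _ ≤ ε := by linarith

/-- integral form of Gronwall's inequality -/
lemma gronwall_int {φ : ℝ → ℝ} {A K T : ℝ} (hT : 0 < T) (hK : 0 < K) (hA : 0 ≤ A)
    (hφc : Continuous φ) (hφ0 : ∀ u ∈ Icc (0:ℝ) T, 0 ≤ φ u)
    (hineq : ∀ u ∈ Icc (0:ℝ) T, φ u ≤ A + K * ∫ v in (0:ℝ)..u, φ v) :
    ∀ u ∈ Icc (0:ℝ) T, φ u ≤ A * Real.exp (K * T) := by
  set ψ : ℝ → ℝ := fun u => ∫ v in (0:ℝ)..u, φ v with hψ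
  have hψd : ∀ x : ℝ, HasDerivAt ψ (φ x) x := fun x =>
    intervalIntegral.integral_hasDerivAt_right (hφc.intervalIntegrable _ _)
      (hφc.stronglyMeasurableAtFilter _ _) hφc.continuousAt
  have hψ0 : ψ 0 = 0 := intervalIntegral.integral_same
  have hψnn : ∀ x ∈ Icc (0:ℝ) T, 0 ≤ ψ x := by
    intro x hx
    apply intervalIntegral.integral_nonneg hx.1
    intro v hv
    exact hφ0 v ⟨hv.1, le_trans hv.2 hx.2⟩
  have hgron := norm_le_gronwallBound_of_norm_deriv_right_le (f := ψ) (f' := φ)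
    (δ := 0) (K := K) (ε := A) (a := 0) (b := T)
    (fun x _ => (hψd x).continuousAt.continuousWithinAt)
    (fun x _ => (hψd x).hasDerivWithinAt)
    (by rw [hψ0, norm_zero])
    ?_
  · intro u hu
    have h1 := hgron u hu
    rw [Real.norm_eq_abs, abs_of_nonneg (hψnn u hu)] at h1
    rw [gronwallBound_of_K_ne_0 hK.ne'] at h1
    simp only [zero_mul, zero_add, sub_zero] at h1
    have h2 := hineq u hu
    have h3 : K * ψ u ≤ A * (Real.exp (K * u) - 1) := by
      have := mul_le_mul_of_nonneg_left h1 hK.le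
      calc K * ψ u ≤ K * (A / K * (Real.exp (K * u) - 1)) := this
        _ = A * (Real.exp (K * u) - 1) := by field_simp
    have h4 : Real.exp (K * u) ≤ Real.exp (K * T) :=
      Real.exp_le_exp.mpr (mul_le_mul_of_nonneg_left hu.2 hK.le)
    have h5 : φ u ≤ A * Real.exp (K * u) := by
      have : φ u ≤ A + K * ψ u := h2
      nlinarith
    calc φ u ≤ A * Real.exp (K * u) := h5
      _ ≤ A * Real.exp (K * T) := mul_le_mul_of_nonneg_left h4 hA
  · intro x hx
    rw [Real.norm_eq_abs, abs_of_nonneg (hφ0 x ⟨hx.1, hx.2.le⟩),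
      Real.norm_eq_abs, abs_of_nonneg (hψnn x ⟨hx.1, hx.2.le⟩)]
    have := hineq x ⟨hx.1, hx.2.le⟩
    linarith

/-- facts about the Hölder seminorm, given some Hölder bound -/
lemma holder_facts {T lam Cw : ℝ} {g : ℝ → Vec d} (hT : 0 < T) (hlam : 0 < lam)
    (hCw : ∀ s ∈ Icc (0:ℝ) T, ∀ t ∈ Icc (0:ℝ) T, ‖g t - g s‖ ≤ Cw * |t - s| ^ lam) :
    0 ≤ holderSemi lam T g ∧
    (∀ s ∈ Icc (0:ℝ) T, ∀ t ∈ Icc (0:ℝ) T, s ≤ t →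
      ‖g t - g s‖ ≤ holderSemi lam T g * (t - s) ^ lam) := by
  set S := {r : ℝ | ∃ s t : ℝ, 0 ≤ s ∧ s < t ∧ t ≤ T ∧ r = ‖g t - g s‖ / (t - s) ^ lam} with hS
  have hbdd : BddAbove S := by
    refine ⟨max Cw 0, ?_⟩
    rintro r ⟨s, t, hs, hst, htT, rfl⟩
    have hpow : 0 < (t - s) ^ lam := Real.rpow_pos_of_pos (by linarith) _
    rw [div_le_iff₀ hpow]
    have h1 := hCw s ⟨hs, by linarith⟩ t ⟨by linarith, htT⟩
    rw [abs_of_nonneg (by linarith : (0:ℝ) ≤ t - s)] at h1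
    calc ‖g t - g s‖ ≤ Cw * (t - s) ^ lam := h1
      _ ≤ max Cw 0 * (t - s) ^ lam :=
        mul_le_mul_of_nonneg_right (le_max_left _ _) hpow.le
  have hne : (‖g T - g 0‖ / (T - 0) ^ lam) ∈ S := ⟨0, T, le_rfl, hT, le_rfl, rfl⟩
  have hΛ0 : 0 ≤ holderSemi lam T g := by
    have h1 : (0:ℝ) ≤ ‖g T - g 0‖ / (T - 0) ^ lam :=
      div_nonneg (norm_nonneg _) (Real.rpow_nonneg (by linarith) _)
    exact le_trans h1 (le_csSup hbdd hne)
  refine ⟨hΛ0, ?_⟩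
  intro s hs t ht hst
  rcases eq_or_lt_of_le hst with h | h
  · subst h
    simp [Real.zero_rpow hlam.ne']
  · have hmem : (‖g t - g s‖ / (t - s) ^ lam) ∈ S := ⟨s, t, hs.1, h, ht.2, rfl⟩
    have h1 : ‖g t - g s‖ / (t - s) ^ lam ≤ holderSemi lam T g := le_csSup hbdd hmem
    have hpow : 0 < (t - s) ^ lam := Real.rpow_pos_of_pos (by linarith) _
    rw [div_le_iff₀ hpow] at h1
    exact h1

end FbmAux


namespace FbmArith

lemma Cbounds {bx K Cs Y : ℝ} (hbx : 0 ≤ bx) (hK : 0 < K) (hCs : 0 ≤ Cs) (hY : 0 ≤ Y) :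
    K * bx ≤ 1 + bx * (1 + K) + (K + 1) * (Cs + Y) ∧
    bx ≤ 1 + bx * (1 + K) + (K + 1) * (Cs + Y) ∧
    K * Cs ≤ 1 + bx * (1 + K) + (K + 1) * (Cs + Y) ∧
    K * Y ≤ 1 + bx * (1 + K) + (K + 1) * (Cs + Y) ∧
    Cs ≤ 1 + bx * (1 + K) + (K + 1) * (Cs + Y) ∧
    Y ≤ 1 + bx * (1 + K) + (K + 1) * (Cs + Y) := by
  refine ⟨?_, ?_, ?_, ?_, ?_, ?_⟩ <;>
    nlinarith [mul_nonneg hbx hK.le, mul_nonneg hK.le hCs, mul_nonneg hK.le hY]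

lemma arith1 {bx K E T xn C : ℝ} (h1 : K * bx ≤ C) (h2 : bx ≤ C) (hE : 0 ≤ E)
    (hT : 0 ≤ T) (hx : 0 ≤ xn) (hC : 0 ≤ C) :
    bx + K * E * bx * T ≤ C * (1 + E * (xn + T)) := by
  nlinarith [mul_le_mul_of_nonneg_right h1 (mul_nonneg hE hT),
    mul_nonneg (mul_nonneg hC hE) hx]

lemma arith2 {K Cs Y C L T1 T2 : ℝ} (h1 : K * Cs ≤ C) (h2 : K * Y ≤ C) (hL : 0 ≤ L)
    (hT1 : 0 ≤ T1) (hT2 : 0 ≤ T2) :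
    K * (Cs * L * T1 + Y * L * T2) ≤ C * L * (T1 + T2) := by
  nlinarith [mul_le_mul_of_nonneg_right h1 (mul_nonneg hL hT1),
    mul_le_mul_of_nonneg_right h2 (mul_nonneg hL hT2)]

lemma arith3 {Cs Y C L T1 T2 : ℝ} (h1 : Cs ≤ C) (h2 : Y ≤ C) (hL : 0 ≤ L)
    (hT1 : 0 ≤ T1) (hT2 : 0 ≤ T2) :
    Cs * L * T1 + Y * L * T2 ≤ C * (L * (T1 + T2)) := by
  nlinarith [mul_le_mul_of_nonneg_right h1 (mul_nonneg hL hT1),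
    mul_le_mul_of_nonneg_right h2 (mul_nonneg hL hT2)]

lemma arith4 {L p1 aa Ta : ℝ} (u : L * (p1 * aa) ≤ L * (p1 * Ta)) :
    L * (p1 + p1 * aa) ≤ (1 + Ta) * (L * p1) := by nlinarith [u]

lemma arith5 {A1 A2 A3 u v : ℝ} (hA1 : 0 ≤ A1) (hA2 : 0 ≤ A2) (hA3 : 0 ≤ A3)
    (hu : 0 ≤ u) (hv : 0 ≤ v) :
    A1 * u + A2 * v + A3 * v ≤ (A1 + A2 + A3) * (u + v) := by
  nlinarith [mul_nonneg hA1 hv, mul_nonneg hA2 hu, mul_nonneg hA3 hu]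

end FbmArith

set_option maxHeartbeats 1000000 in
/-- Lemma 3.2. Under (H1), (H2), with `1 - α0 < λ0 < H` and
`λ0 β0 > H - 1/2`, the solution satisfies, pathwise on every λ0-Hölder path of `B^H`,
`|X_t - X_s| ≤ C{[1+e^{KT}(|x|+T)]|t-s| + e^{KT}‖B^H‖_{λ0}(T^{λ0}+T^{λ0+α0})|t-s|
 + ‖B^H‖_{λ0}(|t-s|^{λ0}+|t-s|^{λ0+α0})} ≤ C(T)(|t-s| + ‖B^H‖_{λ0}|t-s|^{λ0})`. -/
theorem holder_estimate_fbm_sde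
    {Ω : Type*} [MeasurableSpace Ω] (μ : Measure Ω) [IsProbabilityMeasure μ]
    (d : ℕ) (H T : ℝ) (hH : 1/2 < H) (hH1 : H < 1) (hT : 0 < T)
    (B : ℝ → Ω → Vec d) (hB : IsFBM μ d H B)
    (b : Vec d → Vec d) (σ : ℝ → Vec d →L[ℝ] Vec d)
    -- hypothesis (H1)(i)
    (K : ℝ) (hK : 0 < K) (hb : Differentiable ℝ b) (hbK : ∀ y, ‖fderiv ℝ b y‖ ≤ K)
    -- hypothesis (H1)(ii)
    (Cσ : ℝ) (hσbd : ∀ t ∈ Set.Icc (0:ℝ) T, ‖σ t‖ ≤ Cσ)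
    (σinv : ℝ → Vec d →L[ℝ] Vec d)
    (hσinv : ∀ t ∈ Set.Icc (0:ℝ) T,
      (σ t).comp (σinv t) = ContinuousLinearMap.id ℝ (Vec d) ∧
      (σinv t).comp (σ t) = ContinuousLinearMap.id ℝ (Vec d))
    (K' α0 : ℝ) (hK' : 0 < K') (hα0 : H - 1/2 < α0 ∧ α0 ≤ 1)
    (hσH : ∀ s ∈ Set.Icc (0:ℝ) T, ∀ t ∈ Set.Icc (0:ℝ) T,
      ‖σinv t - σinv s‖ ≤ K' * |t - s| ^ α0)
    -- hypothesis (H2)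
    (L β0 : ℝ) (hL : 0 ≤ L) (hβ0 : 1 - 1/(2*H) < β0 ∧ β0 ≤ 1)
    (hbH2 : ∀ y z, ‖fderiv ℝ b y - fderiv ℝ b z‖ ≤ L * ‖y - z‖ ^ β0)
    -- the exponent λ0
    (lam0 : ℝ) (hlam0 : 1 - α0 < lam0 ∧ lam0 < H ∧ H - 1/2 < lam0 * β0)
    -- the solution
    (x : Vec d) (X : ℝ → Ω → Vec d) (hX : SolvesSDE T b σ B x X) :
    ∃ C > 0, ∃ CT > 0, ∀ ω,
      (∃ Cw, ∀ s ∈ Set.Icc (0:ℝ) T, ∀ t ∈ Set.Icc (0:ℝ) T,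
        ‖B t ω - B s ω‖ ≤ Cw * |t - s| ^ lam0) →
      ∀ s ∈ Set.Icc (0:ℝ) T, ∀ t ∈ Set.Icc (0:ℝ) T, s ≤ t →
        (‖X t ω - X s ω‖ ≤ C *
          ((1 + Real.exp (K*T) * (‖x‖ + T)) * (t - s)
            + Real.exp (K*T) * holderSemi lam0 T (fun u => B u ω)
                * (T ^ lam0 + T ^ (lam0 + α0)) * (t - s)
            + holderSemi lam0 T (fun u => B u ω)
                * ((t - s) ^ lam0 + (t - s) ^ (lam0 + α0)))) ∧
        C * ((1 + Real.exp (K*T) * (‖x‖ + T)) * (t - s)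
            + Real.exp (K*T) * holderSemi lam0 T (fun u => B u ω)
                * (T ^ lam0 + T ^ (lam0 + α0)) * (t - s)
            + holderSemi lam0 T (fun u => B u ω)
                * ((t - s) ^ lam0 + (t - s) ^ (lam0 + α0)))
          ≤ CT * ((t - s) + holderSemi lam0 T (fun u => B u ω) * (t - s) ^ lam0) := by
  classical
  obtain ⟨hα1, hα2⟩ := hα0
  obtain ⟨hl1, hl2, hl3⟩ := hlam0
  have hα0pos : 0 < α0 := by linarith
  have hlam0pos : 0 < lam0 := by linarith
  have hθ1 : 1 < lam0 + α0 := by linarith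
  have hθpos : 0 < lam0 + α0 := by linarith
  have hlam0lt1 : lam0 < 1 := by linarith
  have hCσ0 : 0 ≤ Cσ := le_trans (norm_nonneg (σ 0)) (hσbd 0 ⟨le_rfl, hT.le⟩)
  set θ := lam0 + α0 with hθdef
  set Hσ := Cσ^2 * K' with hHσdef
  have hHσ0 : 0 ≤ Hσ := by positivity
  have hσHolder : ∀ s ∈ Icc (0:ℝ) T, ∀ t ∈ Icc (0:ℝ) T, ‖σ t - σ s‖ ≤ Hσ * |t - s| ^ α0 := by
    intro s hs t ht
    have hid1 : (σinv s).comp (σ s) = ContinuousLinearMap.id ℝ (Vec d) := (hσinv s hs).2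
    have hid2 : (σ t).comp (σinv t) = ContinuousLinearMap.id ℝ (Vec d) := (hσinv t ht).1
    have key : σ t - σ s = (σ t).comp (((σinv s) - (σinv t)).comp (σ s)) := by
      ext v
      have e1 : σinv s (σ s v) = v := by
        have := congrArg (fun L : Vec d →L[ℝ] Vec d => L v) hid1
        simpa using this
      have e2 : σ t (σinv t (σ s v)) = σ s v := by
        have := congrArg (fun L : Vec d →L[ℝ] Vec d => L (σ s v)) hid2
        simpa using this
      simp [ContinuousLinearMap.comp_apply, ContinuousLinearMap.sub_apply, map_sub, e1, e2]
    have hrpow0 : (0:ℝ) ≤ |t - s| ^ α0 := Real.rpow_nonneg (abs_nonneg _) _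
    have h3 : ‖σinv s - σinv t‖ ≤ K' * |t - s| ^ α0 := by
      rw [norm_sub_rev]
      exact hσH s hs t ht
    rw [key]
    calc ‖(σ t).comp (((σinv s) - (σinv t)).comp (σ s))‖
        ≤ ‖σ t‖ * ‖((σinv s) - (σinv t)).comp (σ s)‖ := ContinuousLinearMap.opNorm_comp_le _ _
      _ ≤ ‖σ t‖ * (‖(σinv s) - (σinv t)‖ * ‖σ s‖) :=
          mul_le_mul_of_nonneg_left (ContinuousLinearMap.opNorm_comp_le _ _) (norm_nonneg _)
      _ ≤ Cσ * ((K' * |t - s| ^ α0) * Cσ) := by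
          have h1 := hσbd t ht
          have h2 := hσbd s hs
          have hm1 : ‖(σinv s) - (σinv t)‖ * ‖σ s‖ ≤ (K' * |t - s| ^ α0) * Cσ :=
            mul_le_mul h3 h2 (norm_nonneg _) (by positivity)
          exact mul_le_mul h1 hm1 (mul_nonneg (norm_nonneg _) (norm_nonneg _)) hCσ0
      _ = Hσ * |t - s| ^ α0 := by rw [hHσdef]; ring
  have hZ0 : 0 ≤ FbmAux.youngZ θ := FbmAux.youngZ_nonneg
  have h2θ0 : (0:ℝ) ≤ 2 ^ θ := Real.rpow_nonneg (by norm_num) _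
  set Y := Hσ * 2 ^ θ * FbmAux.youngZ θ with hYdef
  have hY0 : 0 ≤ Y := mul_nonneg (mul_nonneg hHσ0 h2θ0) hZ0
  set E := Real.exp (K * T) with hEdef
  have hE0 : (0:ℝ) < E := Real.exp_pos _
  have hbx0 : (0:ℝ) ≤ ‖b x‖ := norm_nonneg _
  set C := 1 + ‖b x‖ * (1 + K) + (K + 1) * (Cσ + Y) with hCdef
  have hKY : (0:ℝ) ≤ (K + 1) * (Cσ + Y) := mul_nonneg (by linarith) (by linarith)
  have hbK1 : (0:ℝ) ≤ ‖b x‖ * (1 + K) := mul_nonneg hbx0 (by linarith)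
  have hC0 : 0 < C := by rw [hCdef]; linarith
  have hT1 : (0:ℝ) ≤ T ^ lam0 := Real.rpow_nonneg hT.le _
  have hT2 : (0:ℝ) ≤ T ^ θ := Real.rpow_nonneg hT.le _
  have hT3 : (0:ℝ) ≤ T ^ (1 - lam0) := Real.rpow_nonneg hT.le _
  have hT4 : (0:ℝ) ≤ T ^ α0 := Real.rpow_nonneg hT.le _
  set CT := C * (1 + E * (‖x‖ + T)) + C * E * (T ^ lam0 + T ^ θ) * T ^ (1 - lam0)
      + C * (1 + T ^ α0) with hCTdef
  have hCT0 : 0 < CT := by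
    rw [hCTdef]
    have h1 : (0:ℝ) < C * (1 + E * (‖x‖ + T)) := by positivity
    have h2 : (0:ℝ) ≤ C * E * (T ^ lam0 + T ^ θ) * T ^ (1 - lam0) := by positivity
    have h3 : (0:ℝ) ≤ C * (1 + T ^ α0) := by positivity
    linarith
  refine ⟨C, hC0, CT, hCT0, ?_⟩
  intro ω hω
  obtain ⟨Cw, hCw⟩ := hω
  set g : ℝ → Vec d := fun u => B u ω with hgdef
  obtain ⟨hΛ0, hgΛ⟩ := FbmAux.holder_facts (g := g) hT hlam0pos
    (by intro s hs t ht; exact hCw s hs t ht)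
  set Λ := holderSemi lam0 T g with hΛdef
  obtain ⟨hXc, hX0, hXint⟩ := hX ω
  have hbc : Continuous b := hb.continuous
  have hbXc : Continuous fun v => b (X v ω) := hbc.comp hXc
  set Ifun : ℝ → Vec d := fun u => X u ω - x - ∫ v in (0:ℝ)..u, b (X v ω) with hIdef
  have hIRS : ∀ u ∈ Icc (0:ℝ) T, IsRSIntegral σ g 0 u (Ifun u) := by
    intro u hu
    obtain ⟨I, hI, hXeq⟩ := hXint u hu
    have heq : Ifun u = I := by simp only [hIdef]; rw [hXeq]; abel
    rw [heq]; exact hI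
  have hI0 : Ifun 0 = 0 := by simp [hIdef, hX0]
  have hnoise : ∀ s t : ℝ, 0 ≤ s → s ≤ t → t ≤ T →
      ‖Ifun t - Ifun s‖ ≤ Cσ * Λ * (t - s) ^ lam0 + Y * Λ * (t - s) ^ θ := by
    intro s t hs hst htT
    rcases eq_or_lt_of_le hst with h | h
    · subst h
      simp [Real.zero_rpow hlam0pos.ne', Real.zero_rpow hθpos.ne']
    · have hclose : ∀ ε > 0, ∃ (n : ℕ) (p : ℕ → ℝ), p 0 = s ∧ p n = t ∧
          (∀ k < n, p k < p (k+1)) ∧ ‖rsSum σ g n p - (Ifun t - Ifun s)‖ ≤ ε := by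
        rcases eq_or_lt_of_le hs with h0 | h0
        · subst h0
          simp only [hI0, sub_zero]
          exact FbmAux.close_self (hIRS t ⟨by linarith, htT⟩) h
        · exact FbmAux.close_diff (hIRS s ⟨hs, by linarith⟩)
            (hIRS t ⟨by linarith, htT⟩) h0 h
      have hest := FbmAux.young_est σ g T Hσ Λ lam0 α0 hlam0pos hα0pos hHσ0 hΛ0
        hσHolder hgΛ hθ1 s t hs htT (Ifun t - Ifun s) hclose
      have hσsb : ‖σ s (g t - g s)‖ ≤ Cσ * (Λ * (t - s) ^ lam0) := by
        refine le_trans (ContinuousLinearMap.le_opNorm _ _) ?_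
        exact mul_le_mul (hσbd s ⟨hs, by linarith⟩)
          (hgΛ s ⟨hs, by linarith⟩ t ⟨by linarith, htT⟩ hst) (norm_nonneg _) hCσ0
      have hsplit2 : Hσ * Λ * (2*(t-s)) ^ θ * FbmAux.youngZ θ = Y * Λ * (t - s) ^ θ := by
        rw [hYdef, Real.mul_rpow (by norm_num) (by linarith)]
        ring
      calc ‖Ifun t - Ifun s‖
          ≤ ‖(Ifun t - Ifun s) - σ s (g t - g s)‖ + ‖σ s (g t - g s)‖ := by
            have h5 := norm_add_le ((Ifun t - Ifun s) - σ s (g t - g s)) (σ s (g t - g s))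
            simpa using h5
        _ ≤ Hσ * Λ * (2*(t-s)) ^ θ * FbmAux.youngZ θ + Cσ * (Λ * (t - s) ^ lam0) :=
            add_le_add hest hσsb
        _ = Cσ * Λ * (t - s) ^ lam0 + Y * Λ * (t - s) ^ θ := by rw [hsplit2]; ring
  have hbLip : ∀ y : Vec d, ‖b y‖ ≤ ‖b x‖ + K * ‖y - x‖ := by
    intro y
    have h1 : ‖b y - b x‖ ≤ K * ‖y - x‖ :=
      Convex.norm_image_sub_le_of_norm_fderiv_le (fun z _ => hb z)
        (fun z _ => hbK z) convex_univ (mem_univ x) (mem_univ y)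
    have h2 : ‖b y‖ ≤ ‖b x‖ + ‖b y - b x‖ := by
      calc ‖b y‖ = ‖b x + (b y - b x)‖ := by congr 1; abel
        _ ≤ ‖b x‖ + ‖b y - b x‖ := norm_add_le _ _
    linarith
  set A := ‖b x‖ * T + (Cσ * Λ * T ^ lam0 + Y * Λ * T ^ θ) with hAdef
  have hA0 : 0 ≤ A := by
    have u1 := mul_nonneg (mul_nonneg hCσ0 hΛ0) hT1
    have u2 := mul_nonneg (mul_nonneg hY0 hΛ0) hT2
    have u3 := mul_nonneg hbx0 hT.le
    rw [hAdef]; linarith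
  have hφc : Continuous fun u => ‖X u ω - x‖ := (hXc.sub continuous_const).norm
  have hφineq : ∀ u ∈ Icc (0:ℝ) T,
      ‖X u ω - x‖ ≤ A + K * ∫ v in (0:ℝ)..u, ‖X v ω - x‖ := by
    intro u hu
    have hdecomp : X u ω - x = (∫ v in (0:ℝ)..u, b (X v ω)) + Ifun u := by
      simp only [hIdef]; abel
    have hIu : ‖Ifun u‖ ≤ Cσ * Λ * T ^ lam0 + Y * Λ * T ^ θ := by
      have h1 := hnoise 0 u le_rfl hu.1 hu.2
      rw [hI0, sub_zero] at h1
      have h2 : (u - 0) ^ lam0 ≤ T ^ lam0 :=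
        Real.rpow_le_rpow (by linarith [hu.1]) (by linarith [hu.2]) hlam0pos.le
      have h3 : (u - 0) ^ θ ≤ T ^ θ :=
        Real.rpow_le_rpow (by linarith [hu.1]) (by linarith [hu.2]) hθpos.le
      have h4 := mul_le_mul_of_nonneg_left h2 (mul_nonneg hCσ0 hΛ0)
      have h5 := mul_le_mul_of_nonneg_left h3 (mul_nonneg hY0 hΛ0)
      linarith
    have hint1 : ‖∫ v in (0:ℝ)..u, b (X v ω)‖
        ≤ ∫ v in (0:ℝ)..u, (‖b x‖ + K * ‖X v ω - x‖) := by
      refine le_trans (intervalIntegral.norm_integral_le_integral_norm hu.1) ?_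
      refine intervalIntegral.integral_mono_on hu.1
        ((hbXc.norm).intervalIntegrable _ _)
        ((continuous_const.add (continuous_const.mul hφc)).intervalIntegrable _ _) ?_
      intro v _
      exact hbLip (X v ω)
    have hint2 : (∫ v in (0:ℝ)..u, (‖b x‖ + K * ‖X v ω - x‖))
        = ‖b x‖ * (u - 0) + K * ∫ v in (0:ℝ)..u, ‖X v ω - x‖ := by
      rw [intervalIntegral.integral_add (f := fun _ => ‖b x‖) (g := fun v => K * ‖X v ω - x‖)
        (continuous_const.intervalIntegrable _ _)
        ((continuous_const.mul hφc).intervalIntegrable _ _),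
        intervalIntegral.integral_const_mul, intervalIntegral.integral_const,
        smul_eq_mul]
      ring
    have hn := norm_add_le (∫ v in (0:ℝ)..u, b (X v ω)) (Ifun u)
    rw [← hdecomp] at hn
    have hbxu : ‖b x‖ * (u - 0) ≤ ‖b x‖ * T :=
      mul_le_mul_of_nonneg_left (by linarith [hu.2]) hbx0
    have hint3 := le_trans hint1 (le_of_eq hint2)
    rw [hAdef]
    linarith
  have hgron := FbmAux.gronwall_int hT hK hA0 hφc (fun u _ => norm_nonneg _) hφineq
  intro s hs t ht hst
  rcases eq_or_lt_of_le hst with heq | hlt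
  · subst heq
    constructor
    · simp [Real.zero_rpow hlam0pos.ne', Real.zero_rpow hθpos.ne']
    · simp [Real.zero_rpow hlam0pos.ne', Real.zero_rpow hθpos.ne']
  · have hts0 : (0:ℝ) < t - s := by linarith
    have hadd := intervalIntegral.integral_add_adjacent_intervals (μ := volume)
      (hbXc.intervalIntegrable 0 s) (hbXc.intervalIntegrable s t)
    have hdecomp : X t ω - X s ω = (∫ v in s..t, b (X v ω)) + (Ifun t - Ifun s) := by
      simp only [hIdef]
      rw [← hadd]
      abel
    set M := A * E with hMdef
    have hM0 : 0 ≤ M := mul_nonneg hA0 hE0.le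
    have hdriftb : ∀ v ∈ Set.uIoc s t, ‖b (X v ω)‖ ≤ ‖b x‖ + K * M := by
      intro v hv
      rw [Set.uIoc_of_le hst] at hv
      have hvm : v ∈ Icc (0:ℝ) T := ⟨le_trans hs.1 hv.1.le, le_trans hv.2 ht.2⟩
      have h1 := hbLip (X v ω)
      have h2 : ‖X v ω - x‖ ≤ A * E := by rw [hEdef]; exact hgron v hvm
      have h3 := mul_le_mul_of_nonneg_left h2 hK.le
      calc ‖b (X v ω)‖ ≤ ‖b x‖ + K * ‖X v ω - x‖ := h1
        _ ≤ ‖b x‖ + K * M := by rw [hMdef]; linarith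
    have hdrift : ‖∫ v in s..t, b (X v ω)‖ ≤ (‖b x‖ + K * M) * (t - s) := by
      have h1 := intervalIntegral.norm_integral_le_of_norm_le_const hdriftb
      rwa [abs_of_nonneg (by linarith : (0:ℝ) ≤ t - s)] at h1
    have hnst := hnoise s t hs.1 hst ht.2
    have htotal : ‖X t ω - X s ω‖
        ≤ (‖b x‖ + K * M) * (t - s) + (Cσ * Λ * (t-s) ^ lam0 + Y * Λ * (t-s) ^ θ) := by
      rw [hdecomp]
      exact le_trans (norm_add_le _ _) (add_le_add hdrift hnst)
    have hpl : (0:ℝ) ≤ (t-s) ^ lam0 := Real.rpow_nonneg hts0.le _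
    have hpθ : (0:ℝ) ≤ (t-s) ^ θ := Real.rpow_nonneg hts0.le _
    -- coefficient comparisons
    obtain ⟨e1, e2, kCσ, kY, CσleC, YleC⟩ :
        K * ‖b x‖ ≤ C ∧ ‖b x‖ ≤ C ∧ K * Cσ ≤ C ∧ K * Y ≤ C ∧ Cσ ≤ C ∧ Y ≤ C := by
      rw [hCdef]
      exact FbmArith.Cbounds hbx0 hK hCσ0 hY0
    have hc1 : ‖b x‖ + K * E * ‖b x‖ * T ≤ C * (1 + E * (‖x‖ + T)) :=
      FbmArith.arith1 e1 e2 hE0.le hT.le (norm_nonneg x) hC0.le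
    have hc2 : K * (Cσ * Λ * T ^ lam0 + Y * Λ * T ^ θ) ≤ C * Λ * (T ^ lam0 + T ^ θ) :=
      FbmArith.arith2 kCσ kY hΛ0 hT1 hT2
    have hc3 : Cσ * Λ * (t-s) ^ lam0 + Y * Λ * (t-s) ^ θ
        ≤ C * (Λ * ((t-s) ^ lam0 + (t-s) ^ θ)) :=
      FbmArith.arith3 CσleC YleC hΛ0 hpl hpθ
    constructor
    · -- first conjunct
      have hexpand : (‖b x‖ + K * M) * (t - s)
          = (‖b x‖ + K * E * ‖b x‖ * T) * (t - s)
            + (K * (Cσ * Λ * T ^ lam0 + Y * Λ * T ^ θ)) * E * (t - s) := by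
        rw [hMdef, hAdef]; ring
      have hs1 : (‖b x‖ + K * E * ‖b x‖ * T) * (t - s)
          ≤ C * (1 + E * (‖x‖ + T)) * (t - s) :=
        mul_le_mul_of_nonneg_right hc1 hts0.le
      have hs2 : (K * (Cσ * Λ * T ^ lam0 + Y * Λ * T ^ θ)) * E * (t - s)
          ≤ (C * Λ * (T ^ lam0 + T ^ θ)) * E * (t - s) := by
        have := mul_le_mul_of_nonneg_right hc2 (by positivity : (0:ℝ) ≤ E * (t - s))
        calc (K * (Cσ * Λ * T ^ lam0 + Y * Λ * T ^ θ)) * E * (t - s)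
            = (K * (Cσ * Λ * T ^ lam0 + Y * Λ * T ^ θ)) * (E * (t - s)) := by ring
          _ ≤ (C * Λ * (T ^ lam0 + T ^ θ)) * (E * (t - s)) := this
          _ = (C * Λ * (T ^ lam0 + T ^ θ)) * E * (t - s) := by ring
      calc ‖X t ω - X s ω‖
          ≤ (‖b x‖ + K * M) * (t - s)
            + (Cσ * Λ * (t-s) ^ lam0 + Y * Λ * (t-s) ^ θ) := htotal
        _ ≤ C * (1 + E * (‖x‖ + T)) * (t - s)
            + (C * Λ * (T ^ lam0 + T ^ θ)) * E * (t - s)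
            + C * (Λ * ((t-s) ^ lam0 + (t-s) ^ θ)) := by
              rw [hexpand]
              linarith [hs1, hs2, hc3]
        _ = C * ((1 + E * (‖x‖ + T)) * (t - s)
            + E * Λ * (T ^ lam0 + T ^ θ) * (t - s)
            + Λ * ((t - s) ^ lam0 + (t - s) ^ θ)) := by ring
    · -- second conjunct
      have f1 : (t - s) ^ lam0 * (t - s) ^ (1 - lam0) = t - s := by
        rw [← Real.rpow_add hts0, show lam0 + (1 - lam0) = 1 by ring, Real.rpow_one]
      have f2 : (t - s) ^ θ = (t - s) ^ lam0 * (t - s) ^ α0 := by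
        rw [hθdef, Real.rpow_add hts0]
      have g1 : (t - s) ^ (1 - lam0) ≤ T ^ (1 - lam0) :=
        Real.rpow_le_rpow hts0.le (by linarith [ht.2, hs.1]) (by linarith)
      have g2 : (t - s) ^ α0 ≤ T ^ α0 :=
        Real.rpow_le_rpow hts0.le (by linarith [ht.2, hs.1]) hα0pos.le
      set P := Λ * (t - s) ^ lam0 with hPdef
      have hP0 : 0 ≤ P := mul_nonneg hΛ0 hpl
      have hb2 : E * Λ * (T ^ lam0 + T ^ θ) * (t - s)
          ≤ (E * (T ^ lam0 + T ^ θ) * T ^ (1 - lam0)) * P := by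
        have h0 : E * Λ * (T ^ lam0 + T ^ θ) * (t - s)
            = (E * (T ^ lam0 + T ^ θ)) * Λ * ((t-s) ^ lam0 * (t-s) ^ (1 - lam0)) := by
          rw [f1]; ring
        have hcoef : (0:ℝ) ≤ (E * (T ^ lam0 + T ^ θ)) * Λ :=
          mul_nonneg (by positivity) hΛ0
        rw [h0]
        calc (E * (T ^ lam0 + T ^ θ)) * Λ * ((t-s) ^ lam0 * (t-s) ^ (1 - lam0))
            ≤ (E * (T ^ lam0 + T ^ θ)) * Λ * ((t-s) ^ lam0 * T ^ (1 - lam0)) := by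
              refine mul_le_mul_of_nonneg_left ?_ hcoef
              exact mul_le_mul_of_nonneg_left g1 hpl
          _ = (E * (T ^ lam0 + T ^ θ) * T ^ (1 - lam0)) * P := by rw [hPdef]; ring
      have hb3 : Λ * ((t - s) ^ lam0 + (t - s) ^ θ) ≤ (1 + T ^ α0) * P := by
        have u : Λ * ((t-s) ^ lam0 * (t-s) ^ α0) ≤ Λ * ((t-s) ^ lam0 * T ^ α0) :=
          mul_le_mul_of_nonneg_left (mul_le_mul_of_nonneg_left g2 hpl) hΛ0
        rw [f2, hPdef]
        exact FbmArith.arith4 u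
      have hc1' : (0:ℝ) ≤ 1 + E * (‖x‖ + T) := by positivity
      have hc2' : (0:ℝ) ≤ E * (T ^ lam0 + T ^ θ) * T ^ (1 - lam0) := by positivity
      have hc3' : (0:ℝ) ≤ 1 + T ^ α0 := by positivity
      have hstep : C * ((1 + E * (‖x‖ + T)) * (t - s)
            + E * Λ * (T ^ lam0 + T ^ θ) * (t - s)
            + Λ * ((t - s) ^ lam0 + (t - s) ^ θ))
          ≤ C * ((1 + E * (‖x‖ + T)) * (t - s)
            + (E * (T ^ lam0 + T ^ θ) * T ^ (1 - lam0)) * P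
            + (1 + T ^ α0) * P) := by
        refine mul_le_mul_of_nonneg_left ?_ hC0.le
        linarith [hb2, hb3]
      refine le_trans hstep ?_
      have hfin : C * ((1 + E * (‖x‖ + T)) * (t - s)
            + (E * (T ^ lam0 + T ^ θ) * T ^ (1 - lam0)) * P
            + (1 + T ^ α0) * P)
          ≤ CT * ((t - s) + P) := by
        have harr := FbmArith.arith5 (A1 := C * (1 + E * (‖x‖ + T)))
          (A2 := C * E * (T ^ lam0 + T ^ θ) * T ^ (1 - lam0))
          (A3 := C * (1 + T ^ α0)) (u := t - s) (v := P)
          (by positivity) (by positivity) (by positivity) hts0.le hP0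
        calc C * ((1 + E * (‖x‖ + T)) * (t - s)
            + (E * (T ^ lam0 + T ^ θ) * T ^ (1 - lam0)) * P
            + (1 + T ^ α0) * P)
            = C * (1 + E * (‖x‖ + T)) * (t - s)
              + (C * E * (T ^ lam0 + T ^ θ) * T ^ (1 - lam0)) * P
              + (C * (1 + T ^ α0)) * P := by ring
          _ ≤ (C * (1 + E * (‖x‖ + T)) + C * E * (T ^ lam0 + T ^ θ) * T ^ (1 - lam0)
              + C * (1 + T ^ α0)) * ((t - s) + P) := harr
          _ = CT * ((t - s) + P) := by rw [hCTdef]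
      exact hfin

end
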